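/- Let n ≥ 1 and let s : Fin n → ℕ satisfy ∑_i s i = 2·S. Put S' = 3^n·S + (3^n − 1)/2 and define t : (Fin n × Bool) → ℕ by t (i, true) = 3^(i:ℕ) + 3^n · (s i) + S' and t (i, false) = 3^(i:ℕ) + S'. If a finite subset B ⊆ Fin n × Bool satisfies ∑_{x ∈ B} t x = (n + 1) · S', then B has exactly n elements. -/
import Mathlib


/-- Cardinality claim in the proof that Partition′ is NP-complete: any subset of the
padded sequence summing to `(n+1)·S'` has exactly `n` elements. -/
theorem partition'_card (n S : ℕ) (hn : 1 ≤ n) (s : Fin n → ℕ)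
    (hs : ∑ i, s i = 2 * S)
    (B : Finset (Fin n × Bool))
    (hB : ∑ x ∈ B,
        (if x.2 then 3 ^ (x.1 : ℕ) + 3 ^ n * s x.1 + (3 ^ n * S + (3 ^ n - 1) / 2)
         else 3 ^ (x.1 : ℕ) + (3 ^ n * S + (3 ^ n - 1) / 2)) =
        (n + 1) * (3 ^ n * S + (3 ^ n - 1) / 2)) :
    B.card = n := by
  have geo : ∀ m : ℕ, 2 * ∑ i ∈ Finset.range m, 3 ^ i = 3 ^ m - 1 := by
    intro m
    induction m with
    | zero => simp
    | succ k ih =>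
      rw [Finset.sum_range_succ, Nat.mul_add, ih, pow_succ]
      have : 1 ≤ 3 ^ k := Nat.one_le_pow _ _ (by norm_num)
      omega
  set P := 3 ^ n with hP
  set S' := P * S + (P - 1) / 2 with hS'
  have hP3 : 3 ≤ P := by
    calc 3 = 3 ^ 1 := (pow_one 3).symm
    _ ≤ 3 ^ n := Nat.pow_le_pow_right (by norm_num) hn
  have hP2 : P % 2 = 1 := by
    have hodd : Odd P := hP ▸ Odd.pow (⟨1, by norm_num⟩ : Odd 3)
    obtain ⟨c, hc⟩ := hodd
    omega
  set σ := ∑ x ∈ B, 3 ^ ((x.1 : Fin n) : ℕ) with hσ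
  set τ := ∑ x ∈ B, (if x.2 then s x.1 else 0) with hτdef
  have hB' : σ + P * τ + B.card * S' = (n + 1) * S' := by
    rw [← hB, hσ, hτdef, Finset.mul_sum, ← Finset.sum_add_distrib,
      show B.card * S' = ∑ _x ∈ B, S' by rw [Finset.sum_const, smul_eq_mul],
      ← Finset.sum_add_distrib]
    refine Finset.sum_congr rfl fun x _ => ?_
    rcases x with ⟨i, b⟩
    cases b <;> simp
  have huniv : ∑ x : Fin n × Bool, 3 ^ ((x.1 : Fin n) : ℕ) = P - 1 := by
    rw [Fintype.sum_prod_type]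
    have h1 : ∀ i : Fin n, (∑ _b : Bool, (3 : ℕ) ^ (i : ℕ)) = 2 * 3 ^ (i : ℕ) :=
      fun i => by simp [two_mul]
    rw [Finset.sum_congr rfl fun i _ => h1 i, ← Finset.mul_sum,
      Fin.sum_univ_eq_sum_range (fun i => (3 : ℕ) ^ i), geo n]
  have hσlow : B.card ≤ σ := by
    have := Finset.card_nsmul_le_sum B (fun x => 3 ^ ((x.1 : Fin n) : ℕ)) 1
      (fun x _ => Nat.one_le_pow _ _ (by norm_num))
    simpa using this
  have hcard : B.card ≤ 2 * n := by
    have := Finset.card_le_univ B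
    simpa [Fintype.card_prod, mul_comm] using this
  have hσup : σ + (2 * n - B.card) ≤ P - 1 := by
    have h1 : σ + ∑ x ∈ Bᶜ, 3 ^ ((x.1 : Fin n) : ℕ) = P - 1 := by
      rw [← huniv, hσ, Finset.sum_add_sum_compl]
    have hc : Bᶜ.card = 2 * n - B.card := by
      rw [Finset.card_compl]
      simp [Fintype.card_prod, mul_comm]
    have h2 : 2 * n - B.card ≤ ∑ x ∈ Bᶜ, 3 ^ ((x.1 : Fin n) : ℕ) := by
      have := Finset.card_nsmul_le_sum Bᶜ (fun x => 3 ^ ((x.1 : Fin n) : ℕ)) 1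
        (fun x _ => Nat.one_le_pow _ _ (by norm_num))
      simpa [hc] using this
    omega
  have hτ : τ ≤ 2 * S := by
    calc τ ≤ ∑ x : Fin n × Bool, (if x.2 then s x.1 else 0) :=
          Finset.sum_le_sum_of_subset (Finset.subset_univ B)
      _ = 2 * S := by rw [Fintype.sum_prod_type]; simp [hs]
  have hR : P * τ ≤ 2 * (P * S) := by
    calc P * τ ≤ P * (2 * S) := Nat.mul_le_mul_left P hτ
      _ = 2 * (P * S) := by ring
  rcases lt_trichotomy B.card n with h | h | h
  · exfalso
    have e1 : B.card * S' + 2 * S' ≤ σ + P * τ + B.card * S' := by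
      rw [hB']
      calc B.card * S' + 2 * S' = (B.card + 2) * S' := by ring
        _ ≤ (n + 1) * S' := Nat.mul_le_mul_right _ (by omega)
    have e2 : 2 * S' ≤ σ + P * τ := by
      have e1' : 2 * S' + B.card * S' ≤ (σ + P * τ) + B.card * S' := by
        calc 2 * S' + B.card * S' = B.card * S' + 2 * S' := by ring
          _ ≤ σ + P * τ + B.card * S' := e1
      exact Nat.le_of_add_le_add_right e1'
    set Q := P * S with hQ
    set R := P * τ with hRdef
    omega
  · exact h
  · exfalso
    have e1 : (n + 1) * S' ≤ B.card * S' := Nat.mul_le_mul_right _ (by omega)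
    have e2 : σ + P * τ + B.card * S' ≤ B.card * S' := hB'.le.trans e1
    have e3 : σ + P * τ ≤ 0 :=
      Nat.le_of_add_le_add_right (le_of_le_of_eq e2 (zero_add _).symm)
    omega
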